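/- The field of P-invariant rational functions satisfies F(a0, a1, a2)^P = F(a0, β, Δ), where the action of P extends to the field of fractions of F[V]. -/

import Mathlib

open MvPolynomial
open scoped Classical

set_option maxHeartbeats 1000000
set_option synthInstance.maxHeartbeats 1000000

/-- The algebra automorphism of `F[a0,a1,a2]` induced by the upper-triangular matrix `σ_c`:
`a0 ↦ a0`, `a1 ↦ a1 + c·a0`, `a2 ↦ a2 + 2c·a1 + c²·a0`.  Here `a_i = X i`. -/
noncomputable def σP (F : Type*) [Field F] (c : F) :
    MvPolynomial (Fin 3) F →ₐ[F] MvPolynomial (Fin 3) F :=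
  aeval ![X 0, X 1 + C c * X 0, X 2 + C (2 * c) * X 1 + C (c ^ 2) * X 0]

/-- The algebra automorphism of `F[a0,a1,a2]` induced by `τ`: `a0 ↦ a2`, `a1 ↦ -a1`, `a2 ↦ a0`. -/
noncomputable def τA (F : Type*) [Field F] :
    MvPolynomial (Fin 3) F →ₐ[F] MvPolynomial (Fin 3) F :=
  aeval ![X 2, -X 1, X 0]

set_option linter.unnecessarySeqFocus false in
/-- `σ_c` as an algebra equivalence (its inverse is `σ_{-c}`). -/
noncomputable def σE (F : Type*) [Field F] (c : F) :
    MvPolynomial (Fin 3) F ≃ₐ[F] MvPolynomial (Fin 3) F :=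
  AlgEquiv.ofAlgHom (σP F c) (σP F (-c))
    (by apply MvPolynomial.algHom_ext; intro i; fin_cases i <;>
        simp [σP, mul_neg, neg_mul, map_ofNat] <;> ring)
    (by apply MvPolynomial.algHom_ext; intro i; fin_cases i <;>
        simp [σP, mul_neg, neg_mul, map_ofNat] <;> ring)

/-- `τ` as an algebra equivalence (it is an involution). -/
noncomputable def τE (F : Type*) [Field F] :
    MvPolynomial (Fin 3) F ≃ₐ[F] MvPolynomial (Fin 3) F :=
  AlgEquiv.ofAlgHom (τA F) (τA F)
    (by apply MvPolynomial.algHom_ext; intro i; fin_cases i <;> simp [τA])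
    (by apply MvPolynomial.algHom_ext; intro i; fin_cases i <;> simp [τA])

/-- The extension of `σ_c` to the field of fractions `F(a0,a1,a2)`. -/
noncomputable def σK (F : Type*) [Field F] (c : F) :
    FractionRing (MvPolynomial (Fin 3) F) ≃+* FractionRing (MvPolynomial (Fin 3) F) :=
  IsFractionRing.ringEquivOfRingEquiv (σE F c).toRingEquiv

/-- The extension of `τ` to the field of fractions `F(a0,a1,a2)`. -/
noncomputable def τK (F : Type*) [Field F] :
    FractionRing (MvPolynomial (Fin 3) F) ≃+* FractionRing (MvPolynomial (Fin 3) F) :=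
  IsFractionRing.ringEquivOfRingEquiv (τE F).toRingEquiv

section Aux

variable (F : Type*) [Field F]

lemma σP_comp (a b : F) : (σP F a).comp (σP F b) = σP F (a + b) := by
  apply MvPolynomial.algHom_ext; intro i; fin_cases i <;>
    simp [σP, map_ofNat] <;> ring

lemma σP_zero : σP F 0 = AlgHom.id F _ := by
  apply MvPolynomial.algHom_ext; intro i; fin_cases i <;> simp [σP]

lemma σK_algebraMap (c : F) (x : MvPolynomial (Fin 3) F) :
    σK F c (algebraMap _ (FractionRing (MvPolynomial (Fin 3) F)) x)
      = algebraMap _ _ (σP F c x) :=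
  IsFractionRing.ringEquivOfRingEquiv_algebraMap _ x

lemma σK_add (a b : F) (x : FractionRing (MvPolynomial (Fin 3) F)) :
    σK F a (σK F b x) = σK F (a + b) x := by
  have h : ((σK F a).toRingHom.comp (σK F b).toRingHom) = (σK F (a + b)).toRingHom := by
    apply IsLocalization.ringHom_ext (nonZeroDivisors (MvPolynomial (Fin 3) F))
    refine RingHom.ext fun y => ?_
    simp only [RingHom.comp_apply, RingEquiv.toRingHom_eq_coe, RingHom.coe_coe, σK_algebraMap]
    rw [← σP_comp F a b]; rfl
  exact RingHom.congr_fun h x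

lemma σK_zero (x : FractionRing (MvPolynomial (Fin 3) F)) : σK F 0 x = x := by
  have h : (σK F 0).toRingHom = RingHom.id _ := by
    apply IsLocalization.ringHom_ext (nonZeroDivisors (MvPolynomial (Fin 3) F))
    refine RingHom.ext fun y => ?_
    simp only [RingHom.comp_apply, RingEquiv.toRingHom_eq_coe, RingHom.coe_coe, σK_algebraMap,
      σP_zero, RingHom.id_apply, AlgHom.coe_id, id_eq]
  exact RingHom.congr_fun h x

lemma σP_C (c f : F) : σP F c (C f) = C f := by
  simp [σP, algebraMap_eq]

lemma σP_X0 (c : F) : σP F c (X 0) = X 0 := by simp [σP]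

lemma σP_X1 (c : F) : σP F c (X 1) = X 1 + C c * X 0 := by simp [σP]

lemma σP_Δ (c : F) : σP F c (X 1 ^ 2 - X 0 * X 2) = X 1 ^ 2 - X 0 * X 2 := by
  simp [σP, map_ofNat]
  ring

lemma σP_β {Fq : Type*} [Field Fq] [Fintype Fq] [Algebra Fq F] (c : Fq) :
    σP F (algebraMap Fq F c) (∏ d : Fq, (X 1 + C (algebraMap Fq F d) * X 0)) =
      ∏ d : Fq, (X 1 + C (algebraMap Fq F d) * X 0) := by
  rw [map_prod]
  refine Fintype.prod_equiv (Equiv.addLeft c) _ _ fun d => ?_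
  simp [σP, map_add]
  ring

lemma prod_X_sub_C_eq (Fq : Type*) [Field Fq] [Fintype Fq] :
    ∏ a : Fq, (Polynomial.X - Polynomial.C a)
      = Polynomial.X ^ Fintype.card Fq - Polynomial.X := by
  classical
  have hmonic : (Polynomial.X ^ Fintype.card Fq - Polynomial.X : Polynomial Fq).Monic := by
    apply Polynomial.monic_X_pow_sub
    calc (Polynomial.X : Polynomial Fq).degree ≤ 1 := Polynomial.degree_X_le
    _ < (Fintype.card Fq : ℕ) := by
        have : 2 ≤ Fintype.card Fq := Fintype.one_lt_card
        exact_mod_cast (by omega : 1 < Fintype.card Fq)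
  have hdeg := FiniteField.X_pow_card_sub_X_natDegree_eq Fq (Fintype.one_lt_card (α := Fq))
  have hroots := FiniteField.roots_X_pow_card_sub_X Fq
  have hsplits : Polynomial.Splits
      (Polynomial.X ^ Fintype.card Fq - Polynomial.X : Polynomial Fq) := by
    rw [Polynomial.splits_iff_card_roots, hroots, hdeg]
    simp [Finset.card_univ]
  have h := hsplits.eq_prod_roots_of_monic hmonic
  rw [hroots] at h
  rw [h, Finset.prod_eq_multiset_prod]

lemma prod_sub_eq {Fq A : Type*} [Field Fq] [Fintype Fq] [CommRing A] (ψ : Fq →+* A) (y : A) :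
    ∏ c : Fq, (y - ψ c) = y ^ Fintype.card Fq - y := by
  have h := congrArg (Polynomial.eval₂RingHom ψ y) (prod_X_sub_C_eq Fq)
  simpa using h

lemma beta_identity (Fq : Type*) [Field Fq] [Fintype Fq] [Algebra Fq F] :
    algebraMap (MvPolynomial (Fin 3) F) (FractionRing (MvPolynomial (Fin 3) F))
      (∏ d : Fq, (X 1 + C (algebraMap Fq F d) * X 0)) =
    (algebraMap (MvPolynomial (Fin 3) F) (FractionRing (MvPolynomial (Fin 3) F)) (X 1))
        ^ Fintype.card Fq
      - (algebraMap (MvPolynomial (Fin 3) F) (FractionRing (MvPolynomial (Fin 3) F)) (X 0))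
          ^ (Fintype.card Fq - 1)
        * algebraMap (MvPolynomial (Fin 3) F) (FractionRing (MvPolynomial (Fin 3) F)) (X 1) := by
  classical
  set K := FractionRing (MvPolynomial (Fin 3) F)
  set φ := algebraMap (MvPolynomial (Fin 3) F) K with hφ
  set a0 := φ (X 0) with ha0def
  set a1 := φ (X 1) with ha1def
  have ha0 : a0 ≠ 0 := by
    intro h
    have h' : φ (X 0) = φ 0 := by rw [map_zero]; exact h
    exact MvPolynomial.X_ne_zero (R := F) 0
      (IsFractionRing.injective (MvPolynomial (Fin 3) F) K h')
  set ψ : Fq →+* K := (φ.comp (C : F →+* MvPolynomial (Fin 3) F)).comp (algebraMap Fq F) with hψ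
  have h1 : φ (∏ d : Fq, (X 1 + C (algebraMap Fq F d) * X 0))
      = ∏ d : Fq, (a1 + ψ d * a0) := by
    rw [map_prod]
    exact Finset.prod_congr rfl fun d _ => by rw [map_add, map_mul]; rfl
  have h2 : ∏ d : Fq, (a1 + ψ d * a0) = ∏ d : Fq, (a1 - ψ d * a0) := by
    refine Fintype.prod_equiv (Equiv.neg Fq) _ _ fun d => ?_
    simp
    ring
  have h3 : ∏ d : Fq, (a1 - ψ d * a0) = a0 ^ Fintype.card Fq * ∏ d : Fq, (a1 / a0 - ψ d) :=
    calc ∏ d : Fq, (a1 - ψ d * a0) = ∏ d : Fq, (a0 * (a1 / a0 - ψ d)) :=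
          Finset.prod_congr rfl fun d _ => by rw [mul_sub, mul_div_cancel₀ a1 ha0]; ring
      _ = _ := by rw [Finset.prod_mul_distrib, Finset.prod_const, Finset.card_univ]
  have h4 := prod_sub_eq ψ (a1 / a0)
  rw [h1, h2, h3, h4]
  obtain ⟨m, hm⟩ : ∃ m, Fintype.card Fq = m + 1 :=
    ⟨Fintype.card Fq - 1, (Nat.succ_pred_eq_of_pos Fintype.card_pos).symm⟩
  rw [hm]
  simp only [Nat.add_sub_cancel]
  rw [div_pow]
  rw [mul_sub, mul_div_cancel₀ _ (pow_ne_zero _ ha0), pow_succ a0 m, mul_assoc, mul_div_cancel₀ _ ha0]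

end Aux


lemma subfield_le_of_finrank_le {K : Type*} [Field K] {L Kf : Subfield K} (hLKf : L ≤ Kf)
    {q : ℕ} (hq1 : 1 < q) (hArtin : Module.finrank (↥Kf) K = q)
    (hfd : FiniteDimensional (↥L) K) (hfrK : Module.finrank (↥L) K ≤ q) : Kf ≤ L := by
  letI : Algebra (↥L) (↥Kf) := (Subfield.inclusion hLKf).toAlgebra
  haveI : IsScalarTower (↥L) (↥Kf) K := IsScalarTower.of_algebraMap_eq fun x => rfl
  have hmul : Module.finrank (↥L) (↥Kf) * Module.finrank (↥Kf) K = Module.finrank (↥L) K :=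
    Module.finrank_mul_finrank (↥L) (↥Kf) K
  haveI : IsNoetherian (↥L) K := IsNoetherian.iff_fg.2 hfd
  haveI : FiniteDimensional (↥L) (↥Kf) := Module.Finite.left (↥L) (↥Kf) K
  have hposL : 0 < Module.finrank (↥L) (↥Kf) := Module.finrank_pos
  have hone : Module.finrank (↥L) (↥Kf) = 1 := by
    rw [hArtin] at hmul
    have h1 : Module.finrank (↥L) (↥Kf) * q ≤ 1 * q := by
      rw [one_mul, hmul]; exact hfrK
    have h2 := Nat.le_of_mul_le_mul_right h1 (by omega : 0 < q)
    omega
  intro x hx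
  have hspan : Submodule.span (↥L) ({1} : Set (↥Kf)) = ⊤ :=
    Submodule.eq_top_of_finrank_eq
      (by rw [finrank_span_singleton (one_ne_zero), hone])
  have hx1 : (⟨x, hx⟩ : ↥Kf) ∈ Submodule.span (↥L) ({1} : Set (↥Kf)) := by
    rw [hspan]; trivial
  obtain ⟨a, ha⟩ := Submodule.mem_span_singleton.1 hx1
  have hcoe : ((a • (1 : ↥Kf) : ↥Kf) : K) = (a : K) := by
    rw [Algebra.smul_def, mul_one]; rfl
  rw [ha] at hcoe
  have hxa : x = (a : K) := hcoe
  rw [hxa]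
  exact a.2


/-- `F(a0,a1,a2)^P = F(a0, β, Δ)`: the fixed field of `P` acting on the field of fractions of
`F[a0,a1,a2]` is the subfield generated by the constants `F` together with `a0`, `β` and `Δ`. -/
theorem fixed_field_of_P (F : Type*) [Field F] (p n q : ℕ) (hp : p.Prime) (hp2 : p ≠ 2)
    [CharP F p] (hn : n ≠ 0) (hq : q = p ^ n)
    (Fq : Type*) [Field Fq] [Fintype Fq] [Algebra Fq F] (hcard : Fintype.card Fq = q)
    (Δ β : MvPolynomial (Fin 3) F)
    (hΔ : Δ = X 1 ^ 2 - X 0 * X 2)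
    (hβ : β = ∏ c : Fq, (X 1 + C (algebraMap Fq F c) * X 0)) :
    {x : FractionRing (MvPolynomial (Fin 3) F) | ∀ c : Fq, σK F (algebraMap Fq F c) x = x} =
      (Subfield.closure
        (Set.range ((algebraMap (MvPolynomial (Fin 3) F)
            (FractionRing (MvPolynomial (Fin 3) F))).comp (C : F →+* MvPolynomial (Fin 3) F)) ∪
          {algebraMap _ _ (X 0 : MvPolynomial (Fin 3) F), algebraMap _ _ β, algebraMap _ _ Δ}) :
        Set (FractionRing (MvPolynomial (Fin 3) F))) := by
  classical
  subst hΔ hβ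
  set K := FractionRing (MvPolynomial (Fin 3) F) with hK
  set φ := algebraMap (MvPolynomial (Fin 3) F) K with hφdef
  have hq1 : 1 < q := hq ▸ Nat.one_lt_pow hn hp.one_lt
  -- the group action
  let ψG : Multiplicative Fq →* RingAut K :=
  { toFun := fun g => σK F (algebraMap Fq F g.toAdd)
    map_one' := RingEquiv.ext fun x => by
      show σK F (algebraMap Fq F (Multiplicative.toAdd (1 : Multiplicative Fq))) x = x
      rw [show (Multiplicative.toAdd (1 : Multiplicative Fq)) = (0 : Fq) from rfl, map_zero]
      exact σK_zero F x
    map_mul' := fun g h => RingEquiv.ext fun x => by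
      show σK F (algebraMap Fq F (Multiplicative.toAdd (g * h))) x
        = σK F (algebraMap Fq F g.toAdd) (σK F (algebraMap Fq F h.toAdd) x)
      rw [show (Multiplicative.toAdd (g * h)) = g.toAdd + h.toAdd from rfl, map_add]
      exact (σK_add F (algebraMap Fq F g.toAdd) (algebraMap Fq F h.toAdd) x).symm }
  letI : MulSemiringAction (Multiplicative Fq) K := MulSemiringAction.compHom K ψG
  have hsmul : ∀ (g : Multiplicative Fq) (x : K),
      g • x = σK F (algebraMap Fq F g.toAdd) x := fun _ _ => rfl
  haveI : FaithfulSMul (Multiplicative Fq) K := by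
    constructor
    intro g h hgh
    have h1 := hgh (φ (X 1))
    rw [hsmul, hsmul, σK_algebraMap, σK_algebraMap] at h1
    have h2 := IsFractionRing.injective (MvPolynomial (Fin 3) F) K h1
    rw [σP_X1, σP_X1] at h2
    have h3 := mul_right_cancel₀ (MvPolynomial.X_ne_zero (R := F) 0) (add_left_cancel h2)
    have h4 := MvPolynomial.C_injective (Fin 3) F h3
    have h5 : g.toAdd = h.toAdd := (algebraMap Fq F).injective h4
    exact Multiplicative.toAdd.injective h5
  set Kf := FixedPoints.subfield (Multiplicative Fq) K with hKf
  have hmemKf : ∀ x : K, x ∈ Kf ↔ ∀ c : Fq, σK F (algebraMap Fq F c) x = x := by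
    intro x
    constructor
    · intro hx c
      exact hx (Multiplicative.ofAdd c)
    · intro hx g
      exact hx g.toAdd
  have hcardG : Fintype.card (Multiplicative Fq) = q := by
    rw [← hcard]; exact Fintype.card_congr Multiplicative.toAdd
  have hArtin : Module.finrank Kf K = q := by
    rw [FixedPoints.finrank_eq_card (Multiplicative Fq) K, hcardG]
  set S : Set K := Set.range (φ.comp (C : F →+* MvPolynomial (Fin 3) F)) ∪
      {φ (X 0), φ (∏ c : Fq, (X 1 + C (algebraMap Fq F c) * X 0)),
        φ (X 1 ^ 2 - X 0 * X 2)} with hS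
  set L := Subfield.closure S with hL
  have hCL : ∀ f : F, φ (C f) ∈ L := fun f => Subfield.subset_closure (Or.inl ⟨f, rfl⟩)
  have ha0L : φ (X 0) ∈ L := Subfield.subset_closure (Or.inr (by simp))
  have hβL : φ (∏ c : Fq, (X 1 + C (algebraMap Fq F c) * X 0)) ∈ L :=
    Subfield.subset_closure (Or.inr (by simp))
  have hΔL : φ (X 1 ^ 2 - X 0 * X 2) ∈ L := Subfield.subset_closure (Or.inr (by simp))
  have hLKf : L ≤ Kf := by
    rw [hL, Subfield.closure_le]
    rintro x (⟨f, rfl⟩ | hx)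
    · refine (hmemKf _).2 fun c => ?_
      show σK F (algebraMap Fq F c) (φ (C f)) = φ (C f)
      rw [σK_algebraMap, σP_C]
    · simp only [Set.mem_insert_iff, Set.mem_singleton_iff] at hx
      rcases hx with rfl | rfl | rfl
      · exact (hmemKf _).2 fun c => by rw [σK_algebraMap, σP_X0]
      · exact (hmemKf _).2 fun c => by rw [σK_algebraMap, σP_β]
      · exact (hmemKf _).2 fun c => by rw [σK_algebraMap, σP_Δ]
  -- names for the images of the variables
  set a0 := φ (X 0) with ha0
  set a1 := φ (X 1) with ha1
  set a2 := φ (X 2) with ha2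
  have ha0ne : a0 ≠ 0 := by
    intro h
    have h' : φ (X 0) = φ 0 := by rw [map_zero]; exact h
    exact MvPolynomial.X_ne_zero (R := F) 0
      (IsFractionRing.injective (MvPolynomial (Fin 3) F) K h')
  have hβid : φ (∏ c : Fq, (X 1 + C (algebraMap Fq F c) * X 0))
      = a1 ^ q - a0 ^ (q - 1) * a1 := by
    have h := beta_identity F Fq
    rw [hcard] at h
    exact h
  -- the minimal polynomial bound
  let f : Polynomial (↥L) := Polynomial.X ^ q -
    (Polynomial.C ((⟨a0, ha0L⟩ : ↥L) ^ (q - 1)) * Polynomial.X + Polynomial.C (⟨_, hβL⟩ : ↥L))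
  have hlin : (Polynomial.C ((⟨a0, ha0L⟩ : ↥L) ^ (q - 1)) * Polynomial.X
      + Polynomial.C (⟨_, hβL⟩ : ↥L)).degree ≤ 1 := Polynomial.degree_linear_le
  have hfmonic : f.Monic := Polynomial.monic_X_pow_sub (hlin.trans_lt (by exact_mod_cast hq1))
  have haeval : Polynomial.aeval a1 f = 0 := by
    simp only [f, map_sub, map_add, map_mul, map_pow, Polynomial.aeval_X, Polynomial.aeval_C]
    have hc : (algebraMap (↥L) K) (⟨a0, ha0L⟩ : ↥L) = a0 := rfl
    have hb : (algebraMap (↥L) K) (⟨_, hβL⟩ : ↥L)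
        = φ (∏ c : Fq, (X 1 + C (algebraMap Fq F c) * X 0)) := rfl
    rw [hc, hb, hβid]; ring
  have hint : IsIntegral (↥L) a1 := ⟨f, hfmonic, by rw [← Polynomial.aeval_def]; exact haeval⟩
  -- adjoining a1 to L gives everything
  have hLM : ∀ y : K, y ∈ L → y ∈ IntermediateField.adjoin (↥L) {a1} := fun y hy =>
    IntermediateField.algebraMap_mem _ (⟨y, hy⟩ : ↥L)
  have ha1M : a1 ∈ IntermediateField.adjoin (↥L) {a1} :=
    IntermediateField.subset_adjoin _ _ rfl
  have hΔeq : φ (X 1 ^ 2 - X 0 * X 2) = a1 ^ 2 - a0 * a2 := by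
    rw [map_sub, map_pow, map_mul]
  have ha2eq : a2 = (a1 ^ 2 - φ (X 1 ^ 2 - X 0 * X 2)) * a0⁻¹ := by
    rw [hΔeq, sub_sub_cancel, mul_comm, inv_mul_cancel_left₀ ha0ne]
  have ha2M : a2 ∈ IntermediateField.adjoin (↥L) {a1} := by
    rw [ha2eq]
    exact mul_mem (sub_mem (pow_mem ha1M 2) (hLM _ hΔL)) (inv_mem (hLM _ ha0L))
  have hpoly : ∀ r : MvPolynomial (Fin 3) F, φ r ∈ IntermediateField.adjoin (↥L) {a1} := by
    intro r
    induction r using MvPolynomial.induction_on with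
    | C g => exact hLM _ (hCL g)
    | add p1 q1 ih1 ih2 => rw [map_add]; exact add_mem ih1 ih2
    | mul_X p1 i ih =>
      rw [map_mul]
      refine mul_mem ih ?_
      fin_cases i
      · exact hLM _ ha0L
      · exact ha1M
      · exact ha2M
  have hMtop : IntermediateField.adjoin (↥L) {a1} = ⊤ := by
    rw [eq_top_iff]
    intro x _
    obtain ⟨nu, de, hde, rfl⟩ :=
      IsFractionRing.div_surjective (A := MvPolynomial (Fin 3) F) (z := x)
    exact div_mem (hpoly nu) (hpoly de)
  haveI hfdM : FiniteDimensional (↥L) (IntermediateField.adjoin (↥L) {a1}) :=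
    IntermediateField.adjoin.finiteDimensional hint
  let e := (IntermediateField.equivOfEq hMtop).trans IntermediateField.topEquiv
  haveI hfdK : FiniteDimensional (↥L) K := LinearEquiv.finiteDimensional e.toLinearEquiv
  have hfrK : Module.finrank (↥L) K ≤ q := by
    rw [← e.toLinearEquiv.finrank_eq, IntermediateField.adjoin.finrank hint]
    have hmin := minpoly.min (A := ↥L) (x := a1) hfmonic haeval
    have hdegf : f.degree ≤ (q : WithBot ℕ) := by
      refine (Polynomial.degree_sub_le _ _).trans (max_le ?_ (hlin.trans ?_))
      · exact le_of_eq (Polynomial.degree_X_pow q)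
      · exact_mod_cast hq1.le
    exact Polynomial.natDegree_le_iff_degree_le.2 (hmin.trans hdegf)
  have hKfL : Kf ≤ L := subfield_le_of_finrank_le hLKf hq1 hArtin hfdK hfrK
  have hLKfeq : L = Kf := le_antisymm hLKf hKfL
  ext x
  simp only [Set.mem_setOf_eq, SetLike.mem_coe]
  rw [hLKfeq]
  exact (hmemKf x).symm
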